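/- arXiv:1805.01621 — 3 statements merged into one kernel-verified Lean document; each statement's English description precedes it below -/
import Mathlib

section
/- Let $\mathfrak{g}$ be a Kac–Moody Lie algebra with Chevalley generators $e_i, f_i, h_i$ and symmetric relation $a_{ij} = a_{ji} = -1$. Then the automorphisms $T_i = \exp(\mathrm{ad}\,e_i)\exp(\mathrm{ad}(-f_i))\exp(\mathrm{ad}\,e_i)$ satisfy the braid relation $T_i T_j T_i = T_j T_i T_j$. If instead $a_{ij} = a_{ji} = 0$, then $T_i T_j = T_j T_i$. -/
/-- `T` is the exponential of the (locally nilpotent) adjoint action of `x`. -/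
def IsExpAd {L : Type} [LieRing L] [LieAlgebra ℂ L] (x : L) (T : L → L) : Prop :=
  ∀ (y : L) (n : ℕ), ((LieAlgebra.ad ℂ L x) ^ n) y = 0 →
    T y = ∑ k ∈ Finset.range n, ((k.factorial : ℂ))⁻¹ • ((LieAlgebra.ad ℂ L x) ^ k) y

section BraidAux
open Finset LieAlgebra
variable {L : Type} [LieRing L] [LieAlgebra ℂ L]


namespace Aux

noncomputable def S (x : L) (n : ℕ) (y : L) : L :=
  ∑ k ∈ Finset.range n, ((k.factorial : ℂ))⁻¹ • ((ad ℂ L x) ^ k) y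

lemma pow_eq_zero_of_le {x y : L} {n m : ℕ} (h : ((ad ℂ L x) ^ n) y = 0) (hnm : n ≤ m) :
    ((ad ℂ L x) ^ m) y = 0 := by
  obtain ⟨k, rfl⟩ := Nat.exists_eq_add_of_le hnm
  rw [add_comm, pow_add, Module.End.mul_apply, h, map_zero]

lemma S_stable {x y : L} {n m : ℕ} (h : ((ad ℂ L x) ^ n) y = 0) (hnm : n ≤ m) :
    S x m y = S x n y := by
  rw [S, S, ← Finset.sum_subset (Finset.range_subset_range.2 hnm)]
  intro k hk hk'
  rw [pow_eq_zero_of_le h (by simpa using (Finset.mem_range.not.1 hk')), smul_zero]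

lemma eval {x : L} {T : L → L} (hT : IsExpAd x T) {y : L} {n : ℕ}
    (h : ((ad ℂ L x) ^ n) y = 0) : T y = S x n y := hT y n h

lemma eval_ge {x : L} {T : L → L} (hT : IsExpAd x T) {y : L} {n m : ℕ}
    (h : ((ad ℂ L x) ^ n) y = 0) (hnm : n ≤ m) : T y = S x m y := by
  rw [eval hT h, S_stable h hnm]

lemma unique {x : L} {T T' : L → L} (hT : IsExpAd x T) (hT' : IsExpAd x T') {y : L}
    (h : ∃ n, ((ad ℂ L x) ^ n) y = 0) : T y = T' y := by
  obtain ⟨n, hn⟩ := h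
  rw [eval hT hn, eval hT' hn]

variable {x : L} {T : L → L} (hx : ∀ y : L, ∃ n, ((ad ℂ L x) ^ n) y = 0) (hT : IsExpAd x T)

include hx hT

lemma map_add' (y z : L) : T (y + z) = T y + T z := by
  obtain ⟨n, hn⟩ := hx y
  obtain ⟨m, hm⟩ := hx z
  have hyz : ((ad ℂ L x) ^ (max n m)) (y + z) = 0 := by
    rw [map_add, pow_eq_zero_of_le hn (le_max_left _ _),
      pow_eq_zero_of_le hm (le_max_right _ _), add_zero]
  rw [eval hT hyz, eval_ge hT hn (le_max_left _ _), eval_ge hT hm (le_max_right _ _),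
    S, S, S, ← Finset.sum_add_distrib]
  exact Finset.sum_congr rfl fun k _ => by rw [map_add, smul_add]

lemma map_smul' (c : ℂ) (y : L) : T (c • y) = c • T y := by
  obtain ⟨n, hn⟩ := hx y
  have h : ((ad ℂ L x) ^ n) (c • y) = 0 := by rw [map_smul, hn, smul_zero]
  rw [eval hT h, eval hT hn, S, S, Finset.smul_sum]
  exact Finset.sum_congr rfl fun k _ => by rw [map_smul, smul_comm]

lemma map_neg' (y : L) : T (-y) = - T y := by
  have := map_smul' hx hT (-1) y
  simpa using this

end Aux


section Extra
variable {L : Type} [LieRing L] [LieAlgebra ℂ L]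

lemma leibniz_pow_ad (x a b : L) (n : ℕ) :
    ((ad ℂ L x) ^ n) ⁅a, b⁆ =
      ∑ k ∈ Finset.range (n + 1),
        (n.choose k) • ⁅((ad ℂ L x) ^ k) a, ((ad ℂ L x) ^ (n - k)) b⁆ := by
  induction n with
  | zero => simp
  | succ n ih =>
    have hD : ∀ u v : L, (ad ℂ L x) ⁅u, v⁆ = ⁅(ad ℂ L x) u, v⁆ + ⁅u, (ad ℂ L x) v⁆ := by
      intro u v
      rw [ad_apply, ad_apply, ad_apply, leibniz_lie]
    rw [pow_succ', Module.End.mul_apply, ih, map_sum]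
    have hterm : ∀ k ∈ Finset.range (n+1),
        (ad ℂ L x) ((n.choose k) • ⁅((ad ℂ L x) ^ k) a, ((ad ℂ L x) ^ (n - k)) b⁆) =
        (n.choose k) • ⁅((ad ℂ L x) ^ (k+1)) a, ((ad ℂ L x) ^ (n - k)) b⁆ +
        (n.choose k) • ⁅((ad ℂ L x) ^ k) a, ((ad ℂ L x) ^ (n - k + 1)) b⁆ := by
      intro k _
      rw [map_nsmul, hD, smul_add, pow_succ', pow_succ', Module.End.mul_apply, Module.End.mul_apply]
    rw [Finset.sum_congr rfl hterm, Finset.sum_add_distrib]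
    have h1 : ∑ k ∈ Finset.range (n+1),
        (n.choose k) • ⁅((ad ℂ L x) ^ (k+1)) a, ((ad ℂ L x) ^ (n - k)) b⁆ =
        ∑ k ∈ Finset.range (n+2),
        (if k = 0 then 0 else (n.choose (k-1))) • ⁅((ad ℂ L x) ^ k) a, ((ad ℂ L x) ^ (n + 1 - k)) b⁆ := by
      rw [Finset.sum_range_succ' (fun k => (if k = 0 then 0 else (n.choose (k-1))) • ⁅((ad ℂ L x) ^ k) a, ((ad ℂ L x) ^ (n + 1 - k)) b⁆) (n+1)]
      simp only [Nat.succ_ne_zero, if_false, Nat.add_sub_cancel, Nat.succ_sub_succ_eq_sub,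
        reduceIte, zero_smul, add_zero, Nat.sub_zero]
    have h2 : ∑ k ∈ Finset.range (n+1),
        (n.choose k) • ⁅((ad ℂ L x) ^ k) a, ((ad ℂ L x) ^ (n - k + 1)) b⁆ =
        ∑ k ∈ Finset.range (n+2),
        (if k = n+1 then 0 else (n.choose k)) • ⁅((ad ℂ L x) ^ k) a, ((ad ℂ L x) ^ (n + 1 - k)) b⁆ := by
      rw [Finset.sum_range_succ (fun k => (if k = n+1 then 0 else (n.choose k)) • ⁅((ad ℂ L x) ^ k) a, ((ad ℂ L x) ^ (n + 1 - k)) b⁆) (n+1)]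
      rw [if_pos rfl, zero_smul, add_zero]
      refine Finset.sum_congr rfl fun k hk => ?_
      rw [Finset.mem_range] at hk
      rw [if_neg (by omega)]
      have hs : n + 1 - k = n - k + 1 := by omega
      rw [hs]
    rw [h1, h2, ← Finset.sum_add_distrib]
    refine Finset.sum_congr rfl fun k hk => ?_
    rw [← add_smul]
    congr 1
    rcases Nat.eq_zero_or_pos k with rfl | hk0
    · rw [if_pos rfl, if_neg (by omega : ¬ (0 = n+1)), Nat.choose_zero_right,
        Nat.choose_zero_right, zero_add]
    obtain ⟨m, rfl⟩ := Nat.exists_eq_add_of_le hk0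
    rw [Finset.mem_range] at hk
    rw [if_neg (by omega : ¬ (1 + m = 0))]
    rcases eq_or_ne (1 + m) (n+1) with he | hkn
    · have : m = n := by omega
      rw [he, if_pos rfl, add_zero, Nat.add_sub_cancel, Nat.choose_self, Nat.choose_self]
    · rw [if_neg hkn]
      have h3 : 1 + m = m + 1 := by omega
      rw [h3, Nat.choose_succ_succ, Nat.add_sub_cancel]

lemma lie_sum' {ι : Type*} (u : L) (s : Finset ι) (f : ι → L) :
    ⁅u, ∑ i ∈ s, f i⁆ = ∑ i ∈ s, ⁅u, f i⁆ := by
  simpa only [ad_apply] using map_sum (ad ℂ L u) f s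

lemma sum_lie' {ι : Type*} (u : L) (s : Finset ι) (f : ι → L) :
    ⁅∑ i ∈ s, f i, u⁆ = ∑ i ∈ s, ⁅f i, u⁆ := by
  rw [← lie_skew, lie_sum', ← Finset.sum_neg_distrib]
  exact Finset.sum_congr rfl fun i _ => lie_skew _ _

lemma fact_inv_eq {s k : ℕ} (hk : k ≤ s) :
    ((s.factorial : ℂ))⁻¹ * (s.choose k : ℂ) =
      ((k.factorial : ℂ))⁻¹ * (((s - k).factorial : ℂ))⁻¹ := by
  have h := Nat.choose_mul_factorial_mul_factorial hk
  have h' : ((s.choose k : ℂ)) * (k.factorial : ℂ) * ((s-k).factorial : ℂ) = (s.factorial : ℂ) := by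
    exact_mod_cast congrArg (Nat.cast : ℕ → ℂ) h
  have h1 : (s.factorial : ℂ) ≠ 0 := Nat.cast_ne_zero.2 s.factorial_ne_zero
  have h2 : (k.factorial : ℂ) ≠ 0 := Nat.cast_ne_zero.2 k.factorial_ne_zero
  have h3 : (((s-k).factorial : ℂ)) ≠ 0 := Nat.cast_ne_zero.2 (s-k).factorial_ne_zero
  field_simp
  linear_combination h'
end Extra

namespace Aux
variable {L : Type} [LieRing L] [LieAlgebra ℂ L]

lemma map_lie' {x : L} {T : L → L} (hx : ∀ y : L, ∃ n, ((ad ℂ L x) ^ n) y = 0)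
    (hT : IsExpAd x T) (a b : L) : T ⁅a, b⁆ = ⁅T a, T b⁆ := by
  obtain ⟨n, hn⟩ := hx a
  obtain ⟨m, hm⟩ := hx b
  obtain ⟨p, hp⟩ := hx ⁅a, b⁆
  set D := ad ℂ L x with hDdef
  set M := max p (n + m) with hM
  have hMp : p ≤ M := le_max_left _ _
  have hMnm : n + m ≤ M := le_max_right _ _
  set g : ℕ × ℕ → L :=
    fun q => (((q.1.factorial : ℂ))⁻¹ * ((q.2.factorial : ℂ))⁻¹) • ⁅(D ^ q.1) a, (D ^ q.2) b⁆
    with hg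
  have key : ∀ q : ℕ × ℕ, n + m ≤ q.1 + q.2 → g q = 0 := by
    intro q hq
    rcases le_or_gt n q.1 with h | h
    · rw [hg]; dsimp only; rw [pow_eq_zero_of_le hn h, zero_lie, smul_zero]
    · have h2 : m ≤ q.2 := by omega
      rw [hg]; dsimp only; rw [pow_eq_zero_of_le hm h2, lie_zero, smul_zero]
  -- LHS
  have lhs1 : T ⁅a, b⁆ = ∑ s ∈ Finset.range M, ∑ k ∈ Finset.range (s + 1), g (k, s - k) := by
    rw [eval_ge hT hp hMp, S]
    refine Finset.sum_congr rfl fun s _ => ?_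
    rw [leibniz_pow_ad, Finset.smul_sum]
    refine Finset.sum_congr rfl fun k hk => ?_
    rw [Finset.mem_range] at hk
    rw [hg]
    dsimp only
    rw [← Nat.cast_smul_eq_nsmul ℂ, smul_smul, fact_inv_eq (by omega)]
  have lhs2 : ∑ s ∈ Finset.range M, ∑ k ∈ Finset.range (s + 1), g (k, s - k) =
      ∑ q ∈ (Finset.range M ×ˢ Finset.range M).filter (fun q => q.1 + q.2 < M), g q := by
    rw [Finset.sum_sigma' (Finset.range M) (fun s => Finset.range (s + 1))
      (fun s k => g (k, s - k))]
    refine Finset.sum_bij' (fun q _ => (q.2, q.1 - q.2)) (fun q _ => ⟨q.1 + q.2, q.1⟩)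
      ?_ ?_ ?_ ?_ ?_
    · rintro ⟨s, k⟩ ha
      simp only [Finset.mem_sigma, Finset.mem_range] at ha
      simp only [Finset.mem_filter, Finset.mem_product, Finset.mem_range]
      omega
    · rintro ⟨i, j⟩ ha
      simp only [Finset.mem_filter, Finset.mem_product, Finset.mem_range] at ha
      simp only [Finset.mem_sigma, Finset.mem_range]
      omega
    · rintro ⟨s, k⟩ ha
      have h1 : k + (s - k) = s := by
        simp only [Finset.mem_sigma, Finset.mem_range] at ha
        omega
      dsimp only
      rw [h1]
    · rintro ⟨i, j⟩ ha
      simp only [Finset.mem_filter, Finset.mem_product, Finset.mem_range] at ha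
      simp only [Prod.mk.injEq, Nat.add_sub_cancel_left]
    · rintro ⟨s, k⟩ ha
      rfl
  have lhs3 :
      ∑ q ∈ (Finset.range M ×ˢ Finset.range M).filter (fun q => q.1 + q.2 < M), g q =
      ∑ q ∈ Finset.range M ×ˢ Finset.range M, g q := by
    refine Finset.sum_subset (Finset.filter_subset _ _) ?_
    intro q hq hq'
    have hlt : ¬ (q.1 + q.2 < M) := fun h => hq' (Finset.mem_filter.2 ⟨hq, h⟩)
    exact key q (by omega)
  -- RHS
  have rhs : ⁅T a, T b⁆ = ∑ q ∈ Finset.range M ×ˢ Finset.range M, g q := by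
    rw [eval_ge hT hn (le_trans (Nat.le_add_right n m) hMnm),
      eval_ge hT hm (le_trans (Nat.le_add_left m n) hMnm), S, S, sum_lie',
      Finset.sum_product]
    refine Finset.sum_congr rfl fun i _ => ?_
    rw [lie_sum']
    refine Finset.sum_congr rfl fun j _ => ?_
    rw [hg]
    dsimp only
    rw [smul_lie, lie_smul, smul_smul]
  rw [lhs1, lhs2, lhs3, rhs]

end Aux

namespace Aux
variable {L : Type} [LieRing L] [LieAlgebra ℂ L]

lemma phi_zero {φ : L → L} (hφadd : ∀ u v : L, φ (u + v) = φ u + φ v) : φ 0 = 0 := by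
  have h := hφadd 0 0
  rw [add_zero] at h
  exact left_eq_add.1 h


lemma conj_eval {x x' : L} {T T' : L → L} {φ : L → L}
    (hφadd : ∀ u v : L, φ (u + v) = φ u + φ v)
    (hφsmul : ∀ (c : ℂ) (u : L), φ (c • u) = c • φ u)
    (hφlie : ∀ u v : L, φ ⁅u, v⁆ = ⁅φ u, φ v⁆)
    (hT : IsExpAd x T) (hT' : IsExpAd x' T') (hx' : φ x = x')
    {y : L} (hy : ∃ n, ((ad ℂ L x) ^ n) y = 0) :
    φ (T y) = T' (φ y) := by
  obtain ⟨n, hn⟩ := hy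
  have hiter : ∀ k : ℕ, φ (((ad ℂ L x) ^ k) y) = ((ad ℂ L x') ^ k) (φ y) := by
    intro k
    induction k with
    | zero => simp
    | succ k ih =>
      rw [pow_succ', pow_succ', Module.End.mul_apply, Module.End.mul_apply, ad_apply, ad_apply,
        hφlie, hx', ih]
  have hn' : ((ad ℂ L x') ^ n) (φ y) = 0 := by
    rw [← hiter, hn, phi_zero hφadd]
  rw [eval hT hn, eval hT' hn', S, S]
  let φ' : L →+ L := AddMonoidHom.mk' φ hφadd
  have : φ (∑ k ∈ Finset.range n, ((k.factorial : ℂ))⁻¹ • ((ad ℂ L x) ^ k) y) =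
      ∑ k ∈ Finset.range n, φ (((k.factorial : ℂ))⁻¹ • ((ad ℂ L x) ^ k) y) :=
    map_sum φ' _ _
  rw [this]
  exact Finset.sum_congr rfl fun k _ => by rw [hφsmul, hiter]

lemma eval_fix {x : L} {T : L → L} (hT : IsExpAd x T) {y : L} (h : ⁅x, y⁆ = 0) : T y = y := by
  have h1 : ((ad ℂ L x) ^ 1) y = 0 := by rw [pow_one, ad_apply, h]
  rw [eval hT h1, S]
  simp

lemma eval_two {x : L} {T : L → L} (hT : IsExpAd x T) {y : L} (h : ⁅x, ⁅x, y⁆⁆ = 0) :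
    T y = y + ⁅x, y⁆ := by
  have h2 : ((ad ℂ L x) ^ 2) y = 0 := by
    rw [pow_two, Module.End.mul_apply, ad_apply, ad_apply, h]
  rw [eval hT h2, S]
  rw [Finset.sum_range_succ, Finset.sum_range_one]
  simp [Nat.factorial]

end Aux




end BraidAux

open Aux

/-- Braid relations for `T_i = exp(ad e_i) exp(ad (-f_i)) exp(ad e_i)` on a Kac–Moody algebra:
if `a_{ij} = a_{ji} = -1` then `T_i T_j T_i = T_j T_i T_j`;
if `a_{ij} = a_{ji} = 0` then `T_i T_j = T_j T_i`. -/
theorem stmt6 :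
    (∀ (L : Type) [LieRing L] [LieAlgebra ℂ L], ∀ (ei fi hi ej fj hj : L),
      ⁅hi, ei⁆ = (2 : ℂ) • ei → ⁅hi, fi⁆ = (-2 : ℂ) • fi → ⁅ei, fi⁆ = hi →
      ⁅hj, ej⁆ = (2 : ℂ) • ej → ⁅hj, fj⁆ = (-2 : ℂ) • fj → ⁅ej, fj⁆ = hj →
      ⁅hi, ej⁆ = (-1 : ℂ) • ej → ⁅hi, fj⁆ = (1 : ℂ) • fj →
      ⁅hj, ei⁆ = (-1 : ℂ) • ei → ⁅hj, fi⁆ = (1 : ℂ) • fi →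
      ⁅ei, fj⁆ = 0 → ⁅ej, fi⁆ = 0 → ⁅hi, hj⁆ = 0 →
      ((LieAlgebra.ad ℂ L ei) ^ 2) ej = 0 → ((LieAlgebra.ad ℂ L fi) ^ 2) fj = 0 →
      ((LieAlgebra.ad ℂ L ej) ^ 2) ei = 0 → ((LieAlgebra.ad ℂ L fj) ^ 2) fi = 0 →
      (∀ y : L, ∃ n : ℕ, ((LieAlgebra.ad ℂ L ei) ^ n) y = 0) →
      (∀ y : L, ∃ n : ℕ, ((LieAlgebra.ad ℂ L (-fi)) ^ n) y = 0) →
      (∀ y : L, ∃ n : ℕ, ((LieAlgebra.ad ℂ L ej) ^ n) y = 0) →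
      (∀ y : L, ∃ n : ℕ, ((LieAlgebra.ad ℂ L (-fj)) ^ n) y = 0) →
      ∀ (Eei Ffi Eej Ffj : L → L),
        IsExpAd ei Eei → IsExpAd (-fi) Ffi → IsExpAd ej Eej → IsExpAd (-fj) Ffj →
        ∀ y : L,
          Eei (Ffi (Eei (Eej (Ffj (Eej (Eei (Ffi (Eei y)))))))) =
            Eej (Ffj (Eej (Eei (Ffi (Eei (Eej (Ffj (Eej y)))))))))
    ∧
    (∀ (L : Type) [LieRing L] [LieAlgebra ℂ L], ∀ (ei fi hi ej fj hj : L),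
      ⁅hi, ei⁆ = (2 : ℂ) • ei → ⁅hi, fi⁆ = (-2 : ℂ) • fi → ⁅ei, fi⁆ = hi →
      ⁅hj, ej⁆ = (2 : ℂ) • ej → ⁅hj, fj⁆ = (-2 : ℂ) • fj → ⁅ej, fj⁆ = hj →
      ⁅hi, ej⁆ = 0 → ⁅hi, fj⁆ = 0 → ⁅hj, ei⁆ = 0 → ⁅hj, fi⁆ = 0 →
      ⁅ei, fj⁆ = 0 → ⁅ej, fi⁆ = 0 → ⁅hi, hj⁆ = 0 →
      ⁅ei, ej⁆ = 0 → ⁅fi, fj⁆ = 0 →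
      (∀ y : L, ∃ n : ℕ, ((LieAlgebra.ad ℂ L ei) ^ n) y = 0) →
      (∀ y : L, ∃ n : ℕ, ((LieAlgebra.ad ℂ L (-fi)) ^ n) y = 0) →
      (∀ y : L, ∃ n : ℕ, ((LieAlgebra.ad ℂ L ej) ^ n) y = 0) →
      (∀ y : L, ∃ n : ℕ, ((LieAlgebra.ad ℂ L (-fj)) ^ n) y = 0) →
      ∀ (Eei Ffi Eej Ffj : L → L),
        IsExpAd ei Eei → IsExpAd (-fi) Ffi → IsExpAd ej Eej → IsExpAd (-fj) Ffj →
        ∀ y : L,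
          Eei (Ffi (Eei (Eej (Ffj (Eej y))))) = Eej (Ffj (Eej (Eei (Ffi (Eei y)))))) := by
  constructor
  · -- braid case
    intro L _ _ ei fi hi ej fj hj hie hif heifi hje hjf hejfj hiej hifj hjei hjfi heifj hejfi
      hihj sEiEj sFiFj sEjEi sFjFi nEi nFi nEj nFj Eei Ffi Eej Ffj hEei hFfi hEej hFfj y
    have hiej' : ⁅hi, ej⁆ = -ej := by rw [hiej, neg_one_smul]
    have hjei' : ⁅hj, ei⁆ = -ei := by rw [hjei, neg_one_smul]
    have hifj' : ⁅hi, fj⁆ = fj := by rw [hifj, one_smul]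
    have hjfi' : ⁅hj, fi⁆ = fi := by rw [hjfi, one_smul]
    have hfjei : ⁅fj, ei⁆ = 0 := by rw [← lie_skew, heifj, neg_zero]
    have hfiej : ⁅fi, ej⁆ = 0 := by rw [← lie_skew, hejfi, neg_zero]
    have sEiEj' : ⁅ei, ⁅ei, ej⁆⁆ = 0 := by
      rw [pow_two, Module.End.mul_apply, LieAlgebra.ad_apply, LieAlgebra.ad_apply] at sEiEj
      exact sEiEj
    have sEjEi' : ⁅ej, ⁅ej, ei⁆⁆ = 0 := by
      rw [pow_two, Module.End.mul_apply, LieAlgebra.ad_apply, LieAlgebra.ad_apply] at sEjEi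
      exact sEjEi
    have sFiFj' : ⁅fi, ⁅fi, fj⁆⁆ = 0 := by
      rw [pow_two, Module.End.mul_apply, LieAlgebra.ad_apply, LieAlgebra.ad_apply] at sFiFj
      exact sFiFj
    have sFjFi' : ⁅fj, ⁅fj, fi⁆⁆ = 0 := by
      rw [pow_two, Module.End.mul_apply, LieAlgebra.ad_apply, LieAlgebra.ad_apply] at sFjFi
      exact sFjFi
    have hfjej : ⁅fj, ej⁆ = -hj := by rw [← hejfj, ← lie_skew]
    have hfiei : ⁅fi, ei⁆ = -hi := by rw [← heifi, ← lie_skew]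
    have hejhi : ⁅ej, hi⁆ = ej := by rw [← lie_skew, hiej', neg_neg]
    have hfihj : ⁅fi, hj⁆ = -fi := by rw [← lie_skew, hjfi']
    have jA : ⁅ei, ⁅ej, ei⁆⁆ = 0 := by
      have h := leibniz_lie ei ej ei
      rw [lie_self, lie_zero, add_zero] at h
      rw [h, ← lie_skew, sEiEj', neg_zero]
    have jB : ⁅fj, ⁅ej, ei⁆⁆ = ei := by
      rw [leibniz_lie, hfjej, hfjei, lie_zero, add_zero, neg_lie, hjei', neg_neg]
    have jC : ⁅fi, ⁅ej, ei⁆⁆ = -ej := by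
      rw [leibniz_lie, hfiej, zero_lie, zero_add, hfiei, lie_neg, hejhi]
    have jD : ⁅ej, ⁅fi, fj⁆⁆ = -fi := by
      rw [leibniz_lie, hejfi, zero_lie, zero_add, hejfj, hfihj]
    have jE : ⁅ei, ⁅fi, fj⁆⁆ = fj := by
      rw [leibniz_lie, heifi, heifj, lie_zero, add_zero, hifj']
    -- e-chain : T_i T_j e_i = e_j
    have e1 : Eej ei = ei + ⁅ej, ei⁆ := eval_two hEej sEjEi'
    have e2 : Ffj (ei + ⁅ej, ei⁆) = ⁅ej, ei⁆ := by
      have hbr : ⁅-fj, ei + ⁅ej, ei⁆⁆ = -ei := by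
        rw [neg_lie, lie_add, hfjei, zero_add, jB]
      have h2 : ⁅-fj, ⁅-fj, ei + ⁅ej, ei⁆⁆⁆ = 0 := by
        rw [hbr, lie_neg, neg_lie, neg_neg, hfjei]
      rw [eval_two hFfj h2, hbr]
      abel
    have e3 : Eej ⁅ej, ei⁆ = ⁅ej, ei⁆ := eval_fix hEej sEjEi'
    have e4 : Eei ⁅ej, ei⁆ = ⁅ej, ei⁆ := eval_fix hEei jA
    have e5 : Ffi ⁅ej, ei⁆ = ⁅ej, ei⁆ + ej := by
      have hbr : ⁅-fi, ⁅ej, ei⁆⁆ = ej := by rw [neg_lie, jC, neg_neg]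
      have h2 : ⁅-fi, ⁅-fi, ⁅ej, ei⁆⁆⁆ = 0 := by rw [hbr, neg_lie, hfiej, neg_zero]
      rw [eval_two hFfi h2, hbr]
    have e6 : Eei (⁅ej, ei⁆ + ej) = ej := by
      have hbr : ⁅ei, ⁅ej, ei⁆ + ej⁆ = ⁅ei, ej⁆ := by rw [lie_add, jA, zero_add]
      have h2 : ⁅ei, ⁅ei, ⁅ej, ei⁆ + ej⁆⁆ = 0 := by rw [hbr, sEiEj']
      rw [eval_two hEei h2, hbr, ← lie_skew]
      abel
    have hphiei : Eei (Ffi (Eei (Eej (Ffj (Eej ei))))) = ej := by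
      rw [e1, e2, e3, e4, e5, e6]
    -- f-chain : T_i T_j f_i = f_j
    have f1 : Eej fi = fi := eval_fix hEej hejfi
    have f2 : Ffj fi = fi + ⁅fi, fj⁆ := by
      have hbr : ⁅-fj, fi⁆ = ⁅fi, fj⁆ := by rw [neg_lie]; exact lie_skew fi fj
      have h2 : ⁅-fj, ⁅-fj, fi⁆⁆ = 0 := by
        rw [neg_lie, neg_lie, lie_neg, neg_neg, sFjFi']
      rw [eval_two hFfj h2, hbr]
    have f3 : Eej (fi + ⁅fi, fj⁆) = ⁅fi, fj⁆ := by
      have hbr : ⁅ej, fi + ⁅fi, fj⁆⁆ = -fi := by rw [lie_add, hejfi, zero_add, jD]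
      have h2 : ⁅ej, ⁅ej, fi + ⁅fi, fj⁆⁆⁆ = 0 := by rw [hbr, lie_neg, hejfi, neg_zero]
      rw [eval_two hEej h2, hbr]
      abel
    have f4 : Eei ⁅fi, fj⁆ = ⁅fi, fj⁆ + fj := by
      have h2 : ⁅ei, ⁅ei, ⁅fi, fj⁆⁆⁆ = 0 := by rw [jE, heifj]
      rw [eval_two hEei h2, jE]
    have f5 : Ffi (⁅fi, fj⁆ + fj) = fj := by
      have hbr : ⁅-fi, ⁅fi, fj⁆ + fj⁆ = -⁅fi, fj⁆ := by
        rw [neg_lie, lie_add, sFiFj', zero_add]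
      have h2 : ⁅-fi, ⁅-fi, ⁅fi, fj⁆ + fj⁆⁆ = 0 := by
        rw [hbr, lie_neg, neg_lie, neg_neg, sFiFj']
      rw [eval_two hFfi h2, hbr]
      abel
    have f6 : Eei fj = fj := eval_fix hEei heifj
    have hphifi : Eei (Ffi (Eei (Eej (Ffj (Eej fi))))) = fj := by
      rw [f1, f2, f3, f4, f5, f6]
    -- homomorphism facts
    have addEei := map_add' nEi hEei
    have addFfi := map_add' nFi hFfi
    have addEej := map_add' nEj hEej
    have addFfj := map_add' nFj hFfj
    have smulEei := map_smul' nEi hEei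
    have smulFfi := map_smul' nFi hFfi
    have smulEej := map_smul' nEj hEej
    have smulFfj := map_smul' nFj hFfj
    have lieEei := map_lie' nEi hEei
    have lieFfi := map_lie' nFi hFfi
    have lieEej := map_lie' nEj hEej
    have lieFfj := map_lie' nFj hFfj
    have phiadd : ∀ u v : L,
        Eei (Ffi (Eei (Eej (Ffj (Eej (u + v)))))) =
          Eei (Ffi (Eei (Eej (Ffj (Eej u))))) + Eei (Ffi (Eei (Eej (Ffj (Eej v))))) := by
      intro u v
      rw [addEej, addFfj, addEej, addEei, addFfi, addEei]
    have phismul : ∀ (c : ℂ) (u : L),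
        Eei (Ffi (Eei (Eej (Ffj (Eej (c • u)))))) =
          c • Eei (Ffi (Eei (Eej (Ffj (Eej u))))) := by
      intro c u
      rw [smulEej, smulFfj, smulEej, smulEei, smulFfi, smulEei]
    have philie : ∀ u v : L,
        Eei (Ffi (Eei (Eej (Ffj (Eej ⁅u, v⁆))))) =
          ⁅Eei (Ffi (Eei (Eej (Ffj (Eej u))))), Eei (Ffi (Eei (Eej (Ffj (Eej v)))))⁆ := by
      intro u v
      rw [lieEej, lieFfj, lieEej, lieEei, lieFfi, lieEei]
    have hphinfi : Eei (Ffi (Eei (Eej (Ffj (Eej (-fi)))))) = -fj := by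
      rw [← neg_one_smul ℂ fi, smulEej, smulFfj, smulEej, smulEei, smulFfi, smulEei,
        f1, f2, f3, f4, f5, f6, neg_one_smul]
    have step1 := conj_eval (φ := fun z => Eei (Ffi (Eei (Eej (Ffj (Eej z))))))
      phiadd phismul philie hEei hEej hphiei (nEi (Ffi (Eei y)))
    have step2 := conj_eval (φ := fun z => Eei (Ffi (Eei (Eej (Ffj (Eej z))))))
      phiadd phismul philie hFfi hFfj hphinfi (nFi (Eei y))
    have step3 := conj_eval (φ := fun z => Eei (Ffi (Eei (Eej (Ffj (Eej z))))))
      phiadd phismul philie hEei hEej hphiei (nEi y)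
    exact step1.trans ((congrArg Eej step2).trans (congrArg (fun t => Eej (Ffj t)) step3))
  · -- commuting case
    intro L _ _ ei fi hi ej fj hj hie hif heifi hje hjf hejfj hiej hifj hjei hjfi heifj hejfi
      hihj heiej hfifj nEi nFi nEj nFj Eei Ffi Eej Ffj hEei hFfi hEej hFfj y
    have hejei : ⁅ej, ei⁆ = 0 := by rw [← lie_skew, heiej, neg_zero]
    have hfjei : ⁅fj, ei⁆ = 0 := by rw [← lie_skew, heifj, neg_zero]
    have hfjfi : ⁅fj, fi⁆ = 0 := by rw [← lie_skew, hfifj, neg_zero]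
    have ce1 : Eej ei = ei := eval_fix hEej hejei
    have ce2 : Ffj ei = ei := eval_fix hFfj (by rw [neg_lie, hfjei, neg_zero])
    have cf1 : Eej fi = fi := eval_fix hEej hejfi
    have cf2 : Ffj fi = fi := eval_fix hFfj (by rw [neg_lie, hfjfi, neg_zero])
    have hphiei : Eej (Ffj (Eej ei)) = ei := by rw [ce1, ce2, ce1]
    have addEej := map_add' nEj hEej
    have addFfj := map_add' nFj hFfj
    have smulEej := map_smul' nEj hEej
    have smulFfj := map_smul' nFj hFfj
    have lieEej := map_lie' nEj hEej
    have lieFfj := map_lie' nFj hFfj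
    have phiadd : ∀ u v : L,
        Eej (Ffj (Eej (u + v))) = Eej (Ffj (Eej u)) + Eej (Ffj (Eej v)) := by
      intro u v
      rw [addEej, addFfj, addEej]
    have phismul : ∀ (c : ℂ) (u : L),
        Eej (Ffj (Eej (c • u))) = c • Eej (Ffj (Eej u)) := by
      intro c u
      rw [smulEej, smulFfj, smulEej]
    have philie : ∀ u v : L,
        Eej (Ffj (Eej ⁅u, v⁆)) = ⁅Eej (Ffj (Eej u)), Eej (Ffj (Eej v))⁆ := by
      intro u v
      rw [lieEej, lieFfj, lieEej]
    have hphinfi : Eej (Ffj (Eej (-fi))) = -fi := by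
      rw [← neg_one_smul ℂ fi, smulEej, smulFfj, smulEej, cf1, cf2, cf1]
    have step1 := conj_eval (φ := fun z => Eej (Ffj (Eej z)))
      phiadd phismul philie hEei hEei hphiei (nEi (Ffi (Eei y)))
    have step2 := conj_eval (φ := fun z => Eej (Ffj (Eej z)))
      phiadd phismul philie hFfi hFfi hphinfi (nFi (Eei y))
    have step3 := conj_eval (φ := fun z => Eej (Ffj (Eej z)))
      phiadd phismul philie hEei hEei hphiei (nEi y)
    exact (step1.trans ((congrArg Eei step2).trans
      (congrArg (fun t => Eei (Ffi t)) step3))).symm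
end

section
/- Let $N \ge 3$ and consider $\hat{\mathfrak{gl}}_N$ with affine Chevalley generators $x_0^{\pm}$ and $x_i^{\pm}$ ($1 \le i \le N-1$) as usual, and braid operators $T_i$. Then $T_0 T_1 \cdots T_{k-1}(x_k^+) = E_{N,k+1}(1)$ for $0 \le k \le N-2$, and $T_0 T_1 \cdots T_{N-2}(x_{N-1}^+) = -E_{N,1}(2)$. -/
/-- A copy of the affine Lie algebra `ĝl_N = gl_N ⊗ ℂ[t,t⁻¹] ⊕ ℂc` inside a Lie algebra `L`:
a family `E i j s` (the elements `E_{i,j}(s) = E_{i,j} ⊗ tˢ`, with matrix-unit indices in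
`ZMod N`, the label `N` corresponding to `0`) and a central element `c`, satisfying
`[X(r), Y(s)] = [X,Y](r+s) + r δ_{r+s,0} tr(XY) c`. -/
structure AffineGLData (N : ℕ) (L : Type) [LieRing L] [LieAlgebra ℂ L] where
  E : ZMod N → ZMod N → ℤ → L
  c : L
  central : ∀ y : L, ⁅c, y⁆ = 0
  bracket_eq : ∀ (i j k l : ZMod N) (r s : ℤ),
    ⁅E i j r, E k l s⁆ =
      (if j = k then E i l (r + s) else 0) - (if l = i then E k j (r + s) else 0) +
      (if j = k ∧ l = i ∧ r + s = 0 then (r : ℂ) • c else 0)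

variable {N : ℕ} {L : Type} [LieRing L] [LieAlgebra ℂ L]

/-- The affine Chevalley generator `x_k⁺` (`x_0⁺ = E_{N,1}(1)`, `x_i⁺ = E_{i,i+1}(0)`). -/
def xp (d : AffineGLData N L) (k : ZMod N) : L :=
  if k = 0 then d.E 0 1 1 else d.E k (k + 1) 0

/-- The affine Chevalley generator `x_k⁻` (`x_0⁻ = E_{1,N}(-1)`, `x_i⁻ = E_{i+1,i}(0)`). -/
def xm (d : AffineGLData N L) (k : ZMod N) : L :=
  if k = 0 then d.E 1 0 (-1) else d.E (k + 1) k 0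

/-- The exponential of `ad X` (exact whenever `(ad X)^3 = 0`, as holds for the
adjoint action of the Chevalley generators on `ĝl_N`). -/
noncomputable def expAd (X A : L) : L :=
  A + ⁅X, A⁆ + (2 : ℂ)⁻¹ • ⁅X, ⁅X, A⁆⁆

/-- The braid operator `T_k = exp(ad x_k⁺) exp(ad (-x_k⁻)) exp(ad x_k⁺)` on `ĝl_N`. -/
noncomputable def Taff (d : AffineGLData N L) (k : ZMod N) (A : L) : L :=
  expAd (xp d k) (expAd (-(xm d k)) (expAd (xp d k) A))

/-- `TaffComp d [k₁,…,kₗ] A = T_{k₁} (T_{k₂} ⋯ (T_{kₗ} A))`. -/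
noncomputable def TaffComp (d : AffineGLData N L) (ks : List (ZMod N)) (A : L) : L :=
  ks.foldr (Taff d) A

lemma castNe {N : ℕ} (a b : ℕ) (ha : a < N) (hb : b < N) (h : a ≠ b) :
    (a : ZMod N) ≠ (b : ZMod N) := fun hc => h (by
  have := congrArg ZMod.val hc
  rwa [ZMod.val_cast_of_lt ha, ZMod.val_cast_of_lt hb] at this)

lemma castNe0 {N : ℕ} (a : ℕ) (ha : a < N) (h : a ≠ 0) : (a : ZMod N) ≠ 0 := by
  have := castNe a 0 ha (by omega) h
  simpa using this

lemma lemA (d : AffineGLData N L) (j m : ZMod N) (s : ℤ) (hj : j ≠ 0)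
    (h10 : (1 : ZMod N) ≠ 0) (hm1 : m ≠ j) (hm2 : m ≠ j + 1) :
    Taff d j (d.E (j + 1) m s) = d.E j m s := by
  simp only [Taff, expAd, xp, xm, if_neg hj]
  simp [d.bracket_eq, hm1, hm2, h10, Ne.symm hm1, Ne.symm hm2, Ne.symm h10, lie_add,
    lie_sub, lie_neg, neg_lie, lie_smul, smul_smul]

lemma lemB (d : AffineGLData N L) (m : ZMod N) (h10 : (1 : ZMod N) ≠ 0)
    (hm0 : m ≠ 0) (hm1 : m ≠ 1) :
    Taff d 0 (d.E 1 m 0) = d.E 0 m 1 := by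
  simp only [Taff, expAd, xp, xm, if_pos rfl]
  simp [d.bracket_eq, h10, hm0, hm1, Ne.symm hm0, Ne.symm hm1, Ne.symm h10, lie_add, lie_sub,
    lie_neg, neg_lie, lie_smul, smul_smul]

lemma lemC (d : AffineGLData N L) (h10 : (1 : ZMod N) ≠ 0) :
    Taff d 0 (d.E 1 0 0) = -(d.E 0 1 2) := by
  simp only [Taff, expAd, xp, xm, if_pos rfl]
  simp [d.bracket_eq, h10, Ne.symm h10, lie_add, lie_sub, lie_neg, neg_lie, lie_smul, smul_smul]
  module

lemma taffComp_range_succ (d : AffineGLData N L) (k : ℕ) (A : L) :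
    TaffComp d ((List.range (k + 1)).map (fun t => (t : ZMod N))) A =
      TaffComp d ((List.range k).map (fun t => (t : ZMod N))) (Taff d (k : ZMod N) A) := by
  simp [TaffComp, List.range_succ]

lemma lemE1 (hN : 3 ≤ N) (d : AffineGLData N L) :
    ∀ k, 1 ≤ k → ∀ m : ℕ, k < m → m ≤ N - 1 →
      TaffComp d ((List.range k).map (fun t => (t : ZMod N))) (d.E (k : ZMod N) (m : ZMod N) 0)
        = d.E 0 (m : ZMod N) 1 := by
  have h10 : (1 : ZMod N) ≠ 0 := by
    have h := castNe0 (N := N) 1 (by omega) (by omega)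
    simpa using h
  intro k hk
  induction k, hk using Nat.le_induction with
  | base =>
    intro m h1m hm
    have hlist : TaffComp d ((List.range 1).map (fun t => (t : ZMod N))) = Taff d 0 := by
      funext A; rw [show List.range 1 = [0] from rfl]; simp [TaffComp]
    rw [hlist, show ((1 : ℕ) : ZMod N) = 1 from Nat.cast_one]
    have hm1' : (m : ZMod N) ≠ 1 := by
      have h := castNe (N := N) m 1 (by omega) (by omega) (by omega); simpa using h
    exact lemB d _ h10 (castNe0 m (by omega) (by omega)) hm1'
  | succ k hk ih =>
    intro m hkm hm
    rw [taffComp_range_succ]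
    have hcast : ((k + 1 : ℕ) : ZMod N) = (k : ZMod N) + 1 := by push_cast; ring
    rw [show (d.E ((k+1 : ℕ) : ZMod N) (m : ZMod N) 0) =
        (d.E ((k : ZMod N) + 1) (m : ZMod N) 0) by rw [hcast]]
    rw [lemA d (k : ZMod N) (m : ZMod N) 0 (castNe0 k (by omega) (by omega)) h10
      (castNe (N := N) m k (by omega) (by omega) (by omega))
      (by rw [← hcast]; exact castNe (N := N) m (k+1) (by omega) (by omega) (by omega))]
    exact ih m (by omega) hm

lemma lemE0 (hN : 3 ≤ N) (d : AffineGLData N L) :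
    ∀ k, 1 ≤ k → k ≤ N - 1 →
      TaffComp d ((List.range k).map (fun t => (t : ZMod N))) (d.E (k : ZMod N) 0 0)
        = -(d.E 0 1 2) := by
  have h10 : (1 : ZMod N) ≠ 0 := by
    have h := castNe0 (N := N) 1 (by omega) (by omega)
    simpa using h
  intro k hk
  induction k, hk using Nat.le_induction with
  | base =>
    intro _
    have hlist : TaffComp d ((List.range 1).map (fun t => (t : ZMod N))) = Taff d 0 := by
      funext A; rw [show List.range 1 = [0] from rfl]; simp [TaffComp]
    rw [hlist, show ((1 : ℕ) : ZMod N) = 1 from Nat.cast_one]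
    exact lemC d h10
  | succ k hk ih =>
    intro hm
    rw [taffComp_range_succ]
    have hcast : ((k + 1 : ℕ) : ZMod N) = (k : ZMod N) + 1 := by push_cast; ring
    rw [show (d.E ((k+1 : ℕ) : ZMod N) 0 0) = (d.E ((k : ZMod N) + 1) 0 0) by rw [hcast]]
    rw [lemA d (k : ZMod N) 0 0 (castNe0 k (by omega) (by omega)) h10
      (by have h := castNe (N := N) 0 k (by omega) (by omega) (by omega); simpa using h)
      (by rw [← hcast]
          have h := castNe (N := N) 0 (k+1) (by omega) (by omega) (by omega); simpa using h)]
    exact ih (by omega)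

theorem stmt13 (N : ℕ) [NeZero N] (hN : 3 ≤ N) (L : Type) [LieRing L] [LieAlgebra ℂ L]
    (d : AffineGLData N L) :
    (∀ k : ℕ, k ≤ N - 2 →
      TaffComp d ((List.range k).map (fun t => (t : ZMod N))) (xp d (k : ZMod N)) =
        d.E 0 ((k : ZMod N) + 1) 1) ∧
    TaffComp d ((List.range (N - 1)).map (fun t => (t : ZMod N)))
        (xp d ((N - 1 : ℕ) : ZMod N)) = -(d.E 0 1 2) := by
  constructor
  · intro k hk
    rcases Nat.eq_zero_or_pos k with h0 | h1
    · subst h0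
      simp [TaffComp, xp]
    · have hk0 : (k : ZMod N) ≠ 0 := castNe0 k (by omega) (by omega)
      rw [show xp d (k : ZMod N) = d.E (k : ZMod N) ((k : ZMod N) + 1) 0 from if_neg hk0]
      have hcast : ((k + 1 : ℕ) : ZMod N) = (k : ZMod N) + 1 := by push_cast; ring
      rw [← hcast]
      exact lemE1 hN d k h1 (k + 1) (by omega) (by omega)
  · have hk0 : ((N - 1 : ℕ) : ZMod N) ≠ 0 := castNe0 (N-1) (by omega) (by omega)
    rw [show xp d ((N - 1 : ℕ) : ZMod N) = d.E ((N - 1 : ℕ) : ZMod N) (((N - 1 : ℕ) : ZMod N) + 1) 0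
      from if_neg hk0]
    have hcast : (((N - 1 : ℕ) : ZMod N) + 1) = 0 := by
      have : ((N - 1 : ℕ) : ZMod N) + 1 = ((N - 1 + 1 : ℕ) : ZMod N) := by push_cast; ring
      rw [this, show N - 1 + 1 = N by omega, ZMod.natCast_self]
    rw [hcast]
    exact lemE0 hN d (N - 1) (by omega) (by omega)
end

section
/- In the affine Kac–Moody Lie algebra $\hat{\mathfrak{sl}}_N$ ($N \ge 3$, realized inside $\hat{\mathfrak{gl}}_N$ with fixed central value), define for each $i \in \mathbb{Z}/N\mathbb{Z}$ and $m \ge 1$ the Weyl group element $w(i,m) = t_{-\alpha_{i+1}}^{m-1} s_{i+1}s_{i+2}\cdots s_{i-3}s_{i-2}$ with corresponding braid operator $T_{w(i,m)}$. Then $T_{w(i,m)}(x_{i-1}^+) = (-1)^{m-1} E_{1,N}(m-1)$ if $i = 0$, and $T_{w(i,m)}(x_{i-1}^+) = (-1)^{m-1} E_{i+1,i}(m)$ if $i \ne 0$. -/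
variable {N : ℕ} {L : Type} [LieRing L] [LieAlgebra ℂ L]

/-- The reduced word `s_{i+1} s_{i+2} ⋯ s_{i-2}` (length `N-2`). -/
def tailWord (N : ℕ) (i : ZMod N) : List (ZMod N) :=
  (List.range (N - 2)).map (fun k => i + (k : ZMod N) + 1)

/-- The reduced word of the translation `t_{-α_{i+1}}`; for `i = 1` this is
`s_2 s_3 ⋯ s_{N-1} s_0 s_1 s_0 s_{N-1} ⋯ s_3`. -/
def tWord (N : ℕ) (i : ZMod N) : List (ZMod N) :=
  (List.range (N - 2)).map (fun k => i + (k : ZMod N) + 1) ++ [i - 1, i, i - 1] ++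
    ((List.range (N - 3)).map (fun k => i + (k : ZMod N) + 2)).reverse

/-- The word of `w(i,m) = t_{-α_{i+1}}^{m-1} s_{i+1} s_{i+2} ⋯ s_{i-3} s_{i-2}`. -/
def wWord (N : ℕ) (i : ZMod N) (m : ℕ) : List (ZMod N) :=
  (List.replicate (m - 1) (tWord N i)).flatten ++ tailWord N i

/-- degree bookkeeping -/
def degF (N : ℕ) (p q : ℤ) : ℤ := (q - 1) / (N : ℤ) - (p - 1) / (N : ℤ)

lemma degF_trans (N : ℕ) (p q r : ℤ) : degF N p q + degF N q r = degF N p r := by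
  unfold degF; ring

lemma degF_refl (N : ℕ) (p : ℤ) : degF N p p = 0 := by unfold degF; ring

lemma degF_anti (N : ℕ) (p q : ℤ) : degF N p q = - degF N q p := by unfold degF; ring

lemma degF_shift2 (hN : (N:ℤ) ≠ 0) (p b t : ℤ) :
    degF N p (b + (N:ℤ) * t) = degF N p b + t := by
  unfold degF
  rw [show b + (N:ℤ)*t - 1 = (b-1) + t * (N:ℤ) by ring, Int.add_mul_ediv_right _ _ hN]
  ring

lemma degF_shift1 (hN : (N:ℤ) ≠ 0) (a q t : ℤ) :
    degF N (a + (N:ℤ) * t) q = degF N a q - t := by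
  unfold degF
  rw [show a + (N:ℤ)*t - 1 = (a-1) + t * (N:ℤ) by ring, Int.add_mul_ediv_right _ _ hN]
  ring

noncomputable def Fm (d : AffineGLData N L) (p q : ℤ) : L :=
  d.E (p : ZMod N) (q : ZMod N) (degF N p q)

lemma cast_shift (hN : (N:ℤ) ≠ 0) (a t : ℤ) : ((a + (N:ℤ)*t : ℤ) : ZMod N) = (a : ZMod N) := by
  push_cast
  simp [ZMod.natCast_self]

lemma Fm_shift (d : AffineGLData N L) (hN : (N:ℤ) ≠ 0) (a b t : ℤ) :
    Fm d (a + (N:ℤ)*t) (b + (N:ℤ)*t) = Fm d a b := by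
  unfold Fm
  rw [degF_shift1 hN, degF_shift2 hN, add_sub_cancel_right, cast_shift hN, cast_shift hN]

lemma Fm_lie (d : AffineGLData N L) (hN : (N:ℤ) ≠ 0) (p q p' q' : ℤ) :
    ⁅Fm d p q, Fm d p' q'⁆ =
      (if (q : ZMod N) = (p' : ZMod N) then Fm d p (q' + q - p') else 0)
      - (if (q' : ZMod N) = (p : ZMod N) then Fm d p' (q + q' - p) else 0)
      + (if (q : ZMod N) = (p' : ZMod N) ∧ (q' : ZMod N) = (p : ZMod N) ∧ p + p' = q + q'
          then ((degF N p q : ℤ) : ℂ) else 0) • d.c := by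
  by_cases h1 : (q : ZMod N) = (p' : ZMod N)
  · obtain ⟨t, rfl⟩ : ∃ t, p' = q + (N:ℤ)*t := by
      obtain ⟨t, ht⟩ := (ZMod.intCast_zmod_eq_zero_iff_dvd (p' - q) N).mp
        (by push_cast; rw [← h1]; ring)
      exact ⟨t, by linarith⟩
    have hE1 : d.E (p : ZMod N) (q' : ZMod N) (degF N p q + degF N (q + (N:ℤ)*t) q')
        = Fm d p (q' + q - (q + (N:ℤ)*t)) := by
      rw [show q' + q - (q + (N:ℤ)*t) = q' + (N:ℤ)*(-t) by ring]
      unfold Fm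
      rw [degF_shift2 hN, cast_shift hN, degF_shift1 hN, ← degF_trans N p q q']
      congr 1
      ring
    by_cases h2 : (q' : ZMod N) = (p : ZMod N)
    · obtain ⟨u, rfl⟩ : ∃ u, p = q' + (N:ℤ)*u := by
        obtain ⟨u, hu⟩ := (ZMod.intCast_zmod_eq_zero_iff_dvd (p - q') N).mp
          (by push_cast; rw [← h2]; ring)
        exact ⟨u, by linarith⟩
      have hdeg : degF N (q' + (N:ℤ)*u) q + degF N (q + (N:ℤ)*t) q'
          = degF N (q + (N:ℤ)*t) q + (-u) := by
        rw [degF_shift1 hN q' q u]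
        linarith [degF_trans N (q + (N:ℤ)*t) q' q]
      have hE2 : d.E ((q + (N:ℤ)*t : ℤ) : ZMod N) (q : ZMod N)
            (degF N (q' + (N:ℤ)*u) q + degF N (q + (N:ℤ)*t) q')
          = Fm d (q + (N:ℤ)*t) (q + q' - (q' + (N:ℤ)*u)) := by
        rw [show q + q' - (q' + (N:ℤ)*u) = q + (N:ℤ)*(-u) by ring]
        unfold Fm
        rw [degF_shift2 hN, cast_shift hN q (-u), hdeg]
      have hc3 : (degF N (q' + (N:ℤ)*u) q + degF N (q + (N:ℤ)*t) q' = 0)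
          ↔ ((q' + (N:ℤ)*u) + (q + (N:ℤ)*t) = q + q') := by
        rw [degF_shift1 hN, degF_shift1 hN]
        constructor
        · intro h
          have h' : u + t = 0 := by
            have := degF_trans N q' q q'
            have := degF_refl N q'
            omega
          nlinarith [h']
        · intro h
          have h' : (N:ℤ) * (u + t) = 0 := by linarith
          have h'' : u + t = 0 := by
            rcases mul_eq_zero.mp h' with h3 | h3
            · exact absurd h3 hN
            · exact h3
          have := degF_trans N q' q q'
          have := degF_refl N q'
          omega
      unfold Fm
      rw [d.bracket_eq]
      rw [if_pos h1, if_pos h2]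
      rw [if_pos h1, if_pos h2]
      rw [hE1, hE2]
      congr 1
      by_cases h3 : (q' + (N:ℤ)*u) + (q + (N:ℤ)*t) = q + q'
      · rw [if_pos ⟨h1, h2, hc3.mpr h3⟩, if_pos ⟨h1, h2, h3⟩]
      · rw [if_neg (by rintro ⟨-, -, h⟩; exact h3 (hc3.mp h)), if_neg (by rintro ⟨-, -, h⟩; exact h3 h), zero_smul]
    · unfold Fm
      rw [d.bracket_eq]
      rw [if_pos h1, if_neg h2, if_pos h1, if_neg h2,
        if_neg (by rintro ⟨-, h, -⟩; exact h2 h), if_neg (by rintro ⟨-, h, -⟩; exact h2 h)]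
      rw [hE1, zero_smul]
      rfl
  · by_cases h2 : (q' : ZMod N) = (p : ZMod N)
    · obtain ⟨u, rfl⟩ : ∃ u, p = q' + (N:ℤ)*u := by
        obtain ⟨u, hu⟩ := (ZMod.intCast_zmod_eq_zero_iff_dvd (p - q') N).mp
          (by push_cast; rw [← h2]; ring)
        exact ⟨u, by linarith⟩
      have hE2 : d.E (p' : ZMod N) (q : ZMod N) (degF N (q' + (N:ℤ)*u) q + degF N p' q')
          = Fm d p' (q + q' - (q' + (N:ℤ)*u)) := by
        rw [show q + q' - (q' + (N:ℤ)*u) = q + (N:ℤ)*(-u) by ring]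
        unfold Fm
        rw [degF_shift2 hN, cast_shift hN, degF_shift1 hN, ← degF_trans N p' q' q]
        congr 1
        ring
      unfold Fm
      rw [d.bracket_eq]
      rw [if_neg h1, if_pos h2, if_neg h1, if_pos h2,
        if_neg (by rintro ⟨h, -, -⟩; exact h1 h), if_neg (by rintro ⟨h, -, -⟩; exact h1 h)]
      rw [hE2, zero_smul]
      rfl
    · unfold Fm
      rw [d.bracket_eq]
      rw [if_neg h1, if_neg h2, if_neg h1, if_neg h2,
        if_neg (by rintro ⟨h, -, -⟩; exact h1 h), if_neg (by rintro ⟨h, -, -⟩; exact h1 h), zero_smul]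

noncomputable def Tgen (e f A : L) : L := expAd e (expAd (-f) (expAd e A))

lemma lie_c (d : AffineGLData N L) (x : L) : ⁅x, d.c⁆ = 0 := by
  rw [← lie_skew, d.central, neg_zero]

/-- Case: only the first index `p` is touched, `p ≡ k+1`. -/
lemma Tgen_case3 (d : AffineGLData N L) (hN : (N:ℤ) ≠ 0) (p q : ℤ)
    (h1 : (q : ZMod N) ≠ (p : ZMod N))
    (h2 : (q : ZMod N) ≠ ((p - 1 : ℤ) : ZMod N))
    (h3 : ((p : ℤ) : ZMod N) ≠ ((p - 1 : ℤ) : ZMod N)) :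
    Tgen (Fm d (p-1) p) (Fm d p (p-1)) (Fm d p q) = Fm d (p-1) q := by
  have hb1 : ⁅Fm d (p-1) p, Fm d p q⁆ = Fm d (p-1) q := by
    rw [Fm_lie d hN, if_pos rfl, if_neg h2,
      if_neg (by rintro ⟨-, h, -⟩; exact h2 h), zero_smul,
      show q + p - p = q by ring]
    abel
  have hb2 : ⁅Fm d (p-1) p, Fm d (p-1) q⁆ = 0 := by
    rw [Fm_lie d hN, if_neg h3, if_neg h2,
      if_neg (by rintro ⟨h, -, -⟩; exact h3 h), zero_smul]
    abel
  have hb3 : ⁅Fm d p (p-1), Fm d p q⁆ = 0 := by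
    rw [Fm_lie d hN, if_neg (Ne.symm h3), if_neg h1,
      if_neg (by rintro ⟨h, -, -⟩; exact h3 h.symm), zero_smul]
    abel
  have hb4 : ⁅Fm d p (p-1), Fm d (p-1) q⁆ = Fm d p q := by
    rw [Fm_lie d hN, if_pos rfl, if_neg h1,
      if_neg (by rintro ⟨-, h, -⟩; exact h1 h), zero_smul,
      show q + (p-1) - (p-1) = q by ring]
    abel
  have e1 : expAd (Fm d (p-1) p) (Fm d p q) = Fm d p q + Fm d (p-1) q := by
    rw [expAd, hb1, hb2, smul_zero, add_zero]
  have e2 : expAd (-(Fm d p (p-1))) (Fm d p q + Fm d (p-1) q) = Fm d (p-1) q := by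
    have hx : ⁅-(Fm d p (p-1)), Fm d p q + Fm d (p-1) q⁆ = -(Fm d p q) := by
      rw [neg_lie, lie_add, hb3, hb4, zero_add]
    rw [expAd, hx, neg_lie, lie_neg, hb3]
    simp
  have e3 : expAd (Fm d (p-1) p) (Fm d (p-1) q) = Fm d (p-1) q := by
    rw [expAd, hb2, lie_zero, smul_zero, add_zero, add_zero]
  rw [Tgen, e1, e2, e3]

/-- Case: only the second index `q` is touched, `q ≡ k+1`. -/
lemma Tgen_case5 (d : AffineGLData N L) (hN : (N:ℤ) ≠ 0) (p q : ℤ)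
    (h1 : ((q : ℤ) : ZMod N) ≠ (p : ZMod N))
    (h2 : ((q - 1 : ℤ) : ZMod N) ≠ (p : ZMod N))
    (h3 : ((q : ℤ) : ZMod N) ≠ ((q - 1 : ℤ) : ZMod N)) :
    Tgen (Fm d (q-1) q) (Fm d q (q-1)) (Fm d p q) = Fm d p (q-1) := by
  have hb1 : ⁅Fm d (q-1) q, Fm d p q⁆ = 0 := by
    rw [Fm_lie d hN, if_neg h1, if_neg h3,
      if_neg (by rintro ⟨h, -, -⟩; exact h1 h), zero_smul]
    abel
  have hb2 : ⁅Fm d q (q-1), Fm d p q⁆ = -(Fm d p (q-1)) := by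
    rw [Fm_lie d hN, if_neg h2, if_pos rfl,
      if_neg (by rintro ⟨h, -, -⟩; exact h2 h), zero_smul,
      show (q-1) + q - q = q - 1 by ring]
    abel
  have hb3 : ⁅Fm d q (q-1), Fm d p (q-1)⁆ = 0 := by
    rw [Fm_lie d hN, if_neg h2, if_neg (Ne.symm h3),
      if_neg (by rintro ⟨h, -, -⟩; exact h2 h), zero_smul]
    abel
  have hb4 : ⁅Fm d (q-1) q, Fm d p (q-1)⁆ = -(Fm d p q) := by
    rw [Fm_lie d hN, if_neg h1, if_pos rfl,
      if_neg (by rintro ⟨h, -, -⟩; exact h1 h), zero_smul,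
      show q + (q-1) - (q-1) = q by ring]
    abel
  have e1 : expAd (Fm d (q-1) q) (Fm d p q) = Fm d p q := by
    rw [expAd, hb1, lie_zero, smul_zero, add_zero, add_zero]
  have e2 : expAd (-(Fm d q (q-1))) (Fm d p q) = Fm d p q + Fm d p (q-1) := by
    have hx : ⁅-(Fm d q (q-1)), Fm d p q⁆ = Fm d p (q-1) := by
      rw [neg_lie, hb2, neg_neg]
    rw [expAd, hx, neg_lie, hb3, neg_zero, smul_zero, add_zero]
  have e3 : expAd (Fm d (q-1) q) (Fm d p q + Fm d p (q-1)) = Fm d p (q-1) := by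
    have hx : ⁅Fm d (q-1) q, Fm d p q + Fm d p (q-1)⁆ = -(Fm d p q) := by
      rw [lie_add, hb1, hb4, zero_add]
    rw [expAd, hx, lie_neg, hb1, neg_zero, smul_zero, add_zero]
    abel
  rw [Tgen, e1, e2, e3]

/-- Case: neither index is touched. -/
lemma Tgen_case1 (d : AffineGLData N L) (hN : (N:ℤ) ≠ 0) (a p q : ℤ)
    (h1 : ((a + 1 : ℤ) : ZMod N) ≠ (p : ZMod N))
    (h2 : ((q : ℤ) : ZMod N) ≠ ((a : ℤ) : ZMod N))
    (h3 : ((a : ℤ) : ZMod N) ≠ (p : ZMod N))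
    (h4 : ((q : ℤ) : ZMod N) ≠ ((a + 1 : ℤ) : ZMod N)) :
    Tgen (Fm d a (a+1)) (Fm d (a+1) a) (Fm d p q) = Fm d p q := by
  have hb1 : ⁅Fm d a (a+1), Fm d p q⁆ = 0 := by
    rw [Fm_lie d hN, if_neg h1, if_neg h2,
      if_neg (by rintro ⟨h, -, -⟩; exact h1 h), zero_smul]
    abel
  have hb2 : ⁅Fm d (a+1) a, Fm d p q⁆ = 0 := by
    rw [Fm_lie d hN, if_neg h3, if_neg h4,
      if_neg (by rintro ⟨h, -, -⟩; exact h3 h), zero_smul]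
    abel
  have e1 : expAd (Fm d a (a+1)) (Fm d p q) = Fm d p q := by
    rw [expAd, hb1, lie_zero, smul_zero, add_zero, add_zero]
  have e2 : expAd (-(Fm d (a+1) a)) (Fm d p q) = Fm d p q := by
    rw [expAd, neg_lie, hb2, neg_zero, lie_zero, smul_zero, add_zero, add_zero]
  rw [Tgen, e1, e2, e1]

/-- Case: `X` is of type `f ⊗ tˢ` for the `sl₂`-triple of node `k`:
`p ≡ k+1`, `q ≡ k`. -/
lemma Tgen_case7 (d : AffineGLData N L) (hN : (N:ℤ) ≠ 0) (q w : ℤ)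
    (hne : ((q : ℤ) : ZMod N) ≠ ((q + 1 : ℤ) : ZMod N)) :
    Tgen (Fm d q (q+1)) (Fm d (q+1) q) (Fm d (q+1+(N:ℤ)*w) q)
      = -(Fm d (q+(N:ℤ)*w) (q+1)) := by
  have hc1 : ((q + 1 : ℤ) : ZMod N) = ((q + 1 + (N:ℤ)*w : ℤ) : ZMod N) :=
    (cast_shift hN (q+1) w).symm
  have hc2 : ((q - (N:ℤ)*w : ℤ) : ZMod N) = ((q : ℤ) : ZMod N) := by
    rw [show q - (N:ℤ)*w = q + (N:ℤ)*(-w) by ring]; exact cast_shift hN q (-w)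
  have hc3 : ((q + 1 - (N:ℤ)*w : ℤ) : ZMod N) = ((q + 1 : ℤ) : ZMod N) := by
    rw [show q + 1 - (N:ℤ)*w = (q+1) + (N:ℤ)*(-w) by ring]; exact cast_shift hN (q+1) (-w)
  have hne1 : ((q : ℤ) : ZMod N) ≠ ((q + 1 + (N:ℤ)*w : ℤ) : ZMod N) :=
    fun h => hne (h.trans hc1.symm)
  have hne2 : ((q - (N:ℤ)*w : ℤ) : ZMod N) ≠ ((q + 1 : ℤ) : ZMod N) :=
    fun h => hne (hc2.symm.trans h)
  have hne3 : ((q + 1 - (N:ℤ)*w : ℤ) : ZMod N) ≠ ((q : ℤ) : ZMod N) :=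
    fun h => hne (hc3.symm.trans h).symm
  have hw0 : ∀ x : ℤ, (N:ℤ) * w = x → x = 0 → w = 0 := by
    intro x h1 h2
    rcases mul_eq_zero.mp (h1.trans h2) with h3 | h3
    · exact absurd h3 hN
    · exact h3
  -- the two sl₂ vertices and the five auxiliary vectors
  set e := Fm d q (q+1) with he
  set f := Fm d (q+1) q with hf
  set X := Fm d (q+1+(N:ℤ)*w) q with hX
  set A1 := Fm d q (q-(N:ℤ)*w) with hA1
  set A2 := Fm d (q+1+(N:ℤ)*w) (q+1) with hA2
  set A3 := Fm d q (q+1-(N:ℤ)*w) with hA3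
  set A4 := Fm d (q+1) (q-(N:ℤ)*w) with hA4
  set A5 := Fm d (q+1) (q+1-(N:ℤ)*w) with hA5
  set κ : ℂ := if w = 0 then ((degF N q (q+1) : ℤ) : ℂ) else 0 with hκ
  have hb1 : ⁅e, X⁆ = A1 - A2 + κ • d.c := by
    rw [he, hX, Fm_lie d hN, if_pos hc1, if_pos rfl]
    rw [show q + (q+1) - (q+1+(N:ℤ)*w) = q - (N:ℤ)*w by ring,
      show (q+1) + q - q = q + 1 by ring]
    have hIff1 : (((q+1:ℤ) : ZMod N) = ((q+1+(N:ℤ)*w : ℤ) : ZMod N)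
        ∧ ((q:ℤ) : ZMod N) = ((q:ℤ) : ZMod N)
        ∧ q + (q+1+(N:ℤ)*w) = (q+1) + q) ↔ w = 0 := by
      constructor
      · rintro ⟨-, -, h⟩; exact hw0 _ (by linarith) rfl
      · rintro rfl; exact ⟨hc1, rfl, by ring⟩
    rw [if_congr hIff1 rfl rfl, hκ]
  have hb2 : ⁅e, A1⁆ = -A3 := by
    rw [he, hA1, hA3, Fm_lie d hN, if_neg (Ne.symm hne), if_pos hc2,
      if_neg (by rintro ⟨h, -, -⟩; exact hne h.symm), zero_smul,
      show (q+1) + (q - (N:ℤ)*w) - q = q + 1 - (N:ℤ)*w by ring]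
    abel
  have hb3 : ⁅e, A2⁆ = A3 := by
    rw [he, hA2, hA3, Fm_lie d hN, if_pos hc1, if_neg (Ne.symm hne),
      if_neg (by rintro ⟨-, h, -⟩; exact hne h.symm), zero_smul,
      show (q+1) + (q+1) - (q+1+(N:ℤ)*w) = q + 1 - (N:ℤ)*w by ring]
    abel
  have hb4 : ⁅f, X⁆ = 0 := by
    rw [hf, hX, Fm_lie d hN, if_neg hne1, if_neg hne,
      if_neg (by rintro ⟨h, -, -⟩; exact hne1 h), zero_smul]
    abel
  have hb5 : ⁅f, A1⁆ = A4 := by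
    rw [hf, hA1, hA4, Fm_lie d hN, if_pos rfl, if_neg hne2,
      if_neg (by rintro ⟨-, h, -⟩; exact hne2 h), zero_smul,
      show (q - (N:ℤ)*w) + q - q = q - (N:ℤ)*w by ring]
    abel
  have hb6 : ⁅f, A2⁆ = -X := by
    rw [hf, hA2, hX, Fm_lie d hN, if_neg hne1, if_pos rfl,
      if_neg (by rintro ⟨h, -, -⟩; exact hne1 h), zero_smul,
      show q + (q+1) - (q+1) = q by ring]
    abel
  have hb7 : ⁅f, A3⁆ = A5 - A1 - κ • d.c := by
    rw [hf, hA3, hA5, hA1, Fm_lie d hN, if_pos rfl, if_pos hc3,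
      show (q+1-(N:ℤ)*w) + q - q = q + 1 - (N:ℤ)*w by ring,
      show q + (q+1-(N:ℤ)*w) - (q+1) = q - (N:ℤ)*w by ring]
    have hIff : (((q:ℤ) : ZMod N) = ((q:ℤ) : ZMod N)
        ∧ ((q + 1 - (N:ℤ)*w : ℤ) : ZMod N) = ((q + 1 : ℤ) : ZMod N)
        ∧ (q+1) + q = q + (q+1-(N:ℤ)*w)) ↔ w = 0 := by
      constructor
      · rintro ⟨-, -, h⟩; exact hw0 _ (by linarith) rfl
      · rintro rfl; exact ⟨rfl, hc3, by ring⟩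
    rw [if_congr hIff rfl rfl, degF_anti N (q+1) q, hκ]
    by_cases hw : w = 0
    · rw [if_pos hw, if_pos hw]
      push_cast
      module
    · rw [if_neg hw, if_neg hw, zero_smul]
      abel
  have hb8 : ⁅f, A4⁆ = 0 := by
    rw [hf, hA4, Fm_lie d hN, if_neg hne, if_neg hne2,
      if_neg (by rintro ⟨h, -, -⟩; exact hne h), zero_smul]
    abel
  have hb9 : ⁅f, A5⁆ = -A4 := by
    rw [hf, hA5, hA4, Fm_lie d hN, if_neg hne, if_pos hc3,
      if_neg (by rintro ⟨h, -, -⟩; exact hne h), zero_smul,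
      show q + (q+1-(N:ℤ)*w) - (q+1) = q - (N:ℤ)*w by ring]
    abel
  have hb11 : ⁅e, A3⁆ = 0 := by
    rw [he, hA3, Fm_lie d hN, if_neg (Ne.symm hne), if_neg hne3,
      if_neg (by rintro ⟨h, -, -⟩; exact hne h.symm), zero_smul]
    abel
  have hb12 : ⁅e, A5⁆ = A3 := by
    rw [he, hA5, hA3, Fm_lie d hN, if_pos rfl, if_neg hne3,
      if_neg (by rintro ⟨-, h, -⟩; exact hne3 h), zero_smul,
      show (q+1-(N:ℤ)*w) + (q+1) - (q+1) = q + 1 - (N:ℤ)*w by ring]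
    abel
  -- first exponential
  have e1 : expAd e X = X + A1 - A2 + κ • d.c - A3 := by
    have hx : ⁅e, A1 - A2 + κ • d.c⁆ = -A3 - A3 := by
      rw [lie_add, lie_sub, hb2, hb3, lie_smul, lie_c, smul_zero, add_zero]
    rw [expAd, hb1, hx]
    module
  -- second exponential
  have e2 : expAd (-f) (X + A1 - A2 + κ • d.c - A3) = -A2 - A3 + A5 := by
    have hfU : ⁅f, X + A1 - A2 + κ • d.c - A3⁆ = A4 + X - A5 + A1 + κ • d.c := by
      rw [lie_sub, lie_add, lie_sub, lie_add, hb4, hb5, hb6, hb7,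
        lie_smul, lie_c, smul_zero]
      abel
    have hffU : ⁅f, A4 + X - A5 + A1 + κ • d.c⁆ = A4 + A4 := by
      rw [lie_add, lie_add, lie_sub, lie_add, hb4, hb5, hb8, hb9,
        lie_smul, lie_c, smul_zero]
      abel
    rw [expAd]
    simp only [neg_lie, lie_neg, neg_neg]
    rw [hfU, hffU]
    module
  -- third exponential
  have e3 : expAd e (-A2 - A3 + A5) = -A2 - A3 + A5 := by
    have hx : ⁅e, -A2 - A3 + A5⁆ = 0 := by
      rw [lie_add, lie_sub, lie_neg, hb3, hb11, hb12]
      abel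
    rw [expAd, hx, lie_zero, smul_zero, add_zero, add_zero]
  rw [Tgen, e1, e2, e3]
  -- identify the result via periodicity
  have s1 : A2 = A5 := by
    have h := Fm_shift d hN (q+1) (q+1-(N:ℤ)*w) w
    rw [show q+1-(N:ℤ)*w+(N:ℤ)*w = q+1 by ring] at h
    rw [hA2, hA5, ← h]
  have s2 : Fm d (q+(N:ℤ)*w) (q+1) = A3 := by
    have h := Fm_shift d hN q (q+1-(N:ℤ)*w) w
    rw [show q+1-(N:ℤ)*w+(N:ℤ)*w = q+1 by ring] at h
    rw [hA3, ← h]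
  rw [s1, s2]
  abel

lemma ediv_small {a : ℤ} (h0 : 0 ≤ a) (h1 : a < (N:ℤ)) : a / (N:ℤ) = 0 :=
  Int.ediv_eq_zero_of_lt h0 h1

lemma ediv_neg_one (h : 0 < N) : (-1 : ℤ) / (N:ℤ) = -1 := by
  have hN : (N:ℤ) ≠ 0 := by exact_mod_cast h.ne'
  rw [show (-1 : ℤ) = ((N:ℤ) - 1) + (-1) * (N:ℤ) by omega, Int.add_mul_ediv_right _ _ hN,
    ediv_small (by omega) (by omega)]
  omega

lemma xp_eq (d : AffineGLData N L) [NeZero N] (k : ZMod N) :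
    xp d k = Fm d ((k.val : ℕ) : ℤ) (((k.val : ℕ) : ℤ) + 1) := by
  have hvlt : k.val < N := ZMod.val_lt k
  have hN0 : 0 < N := Nat.pos_of_ne_zero (NeZero.ne N)
  unfold xp Fm degF
  by_cases hk : k = 0
  · subst hk
    rw [if_pos rfl, ZMod.val_zero]
    norm_num [ediv_neg_one hN0, Int.zero_ediv]
  · rw [if_neg hk]
    have h1 : k.val ≠ 0 := fun h => hk ((ZMod.val_eq_zero k).mp h)
    have c1 : (((k.val : ℕ) : ℤ) : ZMod N) = k := by push_cast; exact ZMod.natCast_zmod_val k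
    have c2 : (((((k.val : ℕ) : ℤ) + 1 : ℤ)) : ZMod N) = k + 1 := by
      push_cast; rw [ZMod.natCast_zmod_val]
    have c3 : (((k.val : ℕ) : ℤ) + 1 - 1) / (N:ℤ) - (((k.val : ℕ) : ℤ) - 1) / (N:ℤ) = 0 := by
      rw [show ((k.val : ℕ) : ℤ) + 1 - 1 = ((k.val : ℕ) : ℤ) by ring,
        ediv_small (by omega) (by omega), ediv_small (by omega) (by omega)]
      norm_num
    rw [c1, c2, c3]

lemma xm_eq (d : AffineGLData N L) [NeZero N] (k : ZMod N) :
    xm d k = Fm d (((k.val : ℕ) : ℤ) + 1) ((k.val : ℕ) : ℤ) := by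
  have hvlt : k.val < N := ZMod.val_lt k
  have hN0 : 0 < N := Nat.pos_of_ne_zero (NeZero.ne N)
  unfold xm Fm degF
  by_cases hk : k = 0
  · subst hk
    rw [if_pos rfl, ZMod.val_zero]
    norm_num [ediv_neg_one hN0, Int.zero_ediv]
  · rw [if_neg hk]
    have h1 : k.val ≠ 0 := fun h => hk ((ZMod.val_eq_zero k).mp h)
    have c1 : (((k.val : ℕ) : ℤ) : ZMod N) = k := by push_cast; exact ZMod.natCast_zmod_val k
    have c2 : (((((k.val : ℕ) : ℤ) + 1 : ℤ)) : ZMod N) = k + 1 := by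
      push_cast; rw [ZMod.natCast_zmod_val]
    have c3 : (((k.val : ℕ) : ℤ) - 1) / (N:ℤ) - (((k.val : ℕ) : ℤ) + 1 - 1) / (N:ℤ) = 0 := by
      rw [show ((k.val : ℕ) : ℤ) + 1 - 1 = ((k.val : ℕ) : ℤ) by ring,
        ediv_small (by omega) (by omega), ediv_small (by omega) (by omega)]
      norm_num
    rw [c1, c2, c3]

lemma taff_eq (d : AffineGLData N L) [NeZero N] (k : ZMod N) (p : ℤ)
    (hp : ((p : ℤ) : ZMod N) = k) (A : L) :
    Taff d k A = Tgen (Fm d p (p+1)) (Fm d (p+1) p) A := by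
  have hN : ((N:ℕ):ℤ) ≠ 0 := by exact_mod_cast (NeZero.ne N)
  obtain ⟨t, ht⟩ : ∃ t, p = ((k.val : ℕ) : ℤ) + (N:ℤ)*t := by
    obtain ⟨t, ht⟩ := (ZMod.intCast_zmod_eq_zero_iff_dvd (p - ((k.val : ℕ) : ℤ)) N).mp
      (by push_cast [hp]; rw [ZMod.natCast_zmod_val]; ring)
    exact ⟨t, by linarith⟩
  have h1 : Fm d p (p+1) = Fm d ((k.val : ℕ) : ℤ) (((k.val : ℕ) : ℤ) + 1) := by
    rw [ht, show ((k.val : ℕ) : ℤ) + (N:ℤ)*t + 1 = (((k.val : ℕ) : ℤ) + 1) + (N:ℤ)*t by ring,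
      Fm_shift d hN]
  have h2 : Fm d (p+1) p = Fm d (((k.val : ℕ) : ℤ) + 1) ((k.val : ℕ) : ℤ) := by
    rw [ht, show ((k.val : ℕ) : ℤ) + (N:ℤ)*t + 1 = (((k.val : ℕ) : ℤ) + 1) + (N:ℤ)*t by ring,
      Fm_shift d hN]
  rw [h1, h2, Taff, Tgen, xp_eq d k, xm_eq d k]

lemma expAd_smul (X : L) (r : ℂ) (A : L) : expAd X (r • A) = r • expAd X A := by
  simp only [expAd, lie_smul]
  module

lemma Taff_smul (d : AffineGLData N L) (k : ZMod N) (r : ℂ) (A : L) :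
    Taff d k (r • A) = r • Taff d k A := by
  simp only [Taff, expAd_smul]

lemma TaffComp_smul (d : AffineGLData N L) (ks : List (ZMod N)) (r : ℂ) (A : L) :
    TaffComp d ks (r • A) = r • TaffComp d ks A := by
  induction ks with
  | nil => rfl
  | cons k ks ih =>
    show Taff d k (TaffComp d ks (r • A)) = r • Taff d k (TaffComp d ks A)
    rw [ih, Taff_smul]

lemma TaffComp_append (d : AffineGLData N L) (l1 l2 : List (ZMod N)) (A : L) :
    TaffComp d (l1 ++ l2) A = TaffComp d l1 (TaffComp d l2 A) := by
  simp [TaffComp, List.foldr_append]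

lemma zmod_nat_ne_zero [NeZero N] {n : ℕ} (h1 : 0 < n) (h2 : n < N) :
    ((n : ℕ) : ZMod N) ≠ 0 := by
  rw [Ne, ZMod.natCast_eq_zero_iff]
  intro h
  have := Nat.le_of_dvd h1 h
  omega

lemma sweep (d : AffineGLData N L) [NeZero N] (hN3 : 3 ≤ N) (i : ZMod N) :
    ∀ n : ℕ, n ≤ N - 2 → ∀ P Q : ℤ, ((P : ZMod N) = i + 1 + (n : ZMod N)) →
      ((Q : ZMod N) = i) →
      TaffComp d ((List.range n).map (fun k => i + (k : ZMod N) + 1)) (Fm d P Q)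
        = Fm d (P - (n:ℤ)) Q := by
  intro n
  induction n with
  | zero =>
    intro _ P Q hP hQ
    simp [TaffComp]
  | succ n ih =>
    intro hn P Q hP hQ
    have hN : ((N:ℕ):ℤ) ≠ 0 := by exact_mod_cast (NeZero.ne N)
    have hlist : (List.range (n+1)).map (fun k => i + (k : ZMod N) + 1)
        = (List.range n).map (fun k => i + (k : ZMod N) + 1) ++ [i + ((n:ℕ) : ZMod N) + 1] := by
      rw [List.range_succ]; simp
    rw [hlist, TaffComp_append]
    have hstep : TaffComp d [i + ((n:ℕ) : ZMod N) + 1] (Fm d P Q)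
        = Taff d (i + ((n:ℕ) : ZMod N) + 1) (Fm d P Q) := rfl
    rw [hstep]
    have hcast : ((P - 1 : ℤ) : ZMod N) = i + ((n:ℕ) : ZMod N) + 1 := by
      push_cast [hP]
      ring
    rw [taff_eq d _ (P - 1) hcast, show (P:ℤ) - 1 + 1 = P by ring]
    have hd1 : ((Q : ℤ) : ZMod N) ≠ ((P : ℤ) : ZMod N) := by
      rw [hP, hQ]; intro h
      apply zmod_nat_ne_zero (N := N) (n := n + 2) (by omega) (by omega)
      push_cast at h ⊢
      linear_combination -h
    have hd2 : ((Q : ℤ) : ZMod N) ≠ ((P - 1 : ℤ) : ZMod N) := by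
      rw [hQ, hcast]; intro h
      apply zmod_nat_ne_zero (N := N) (n := n + 1) (by omega) (by omega)
      push_cast at h ⊢
      linear_combination -h
    have hd3 : ((P : ℤ) : ZMod N) ≠ ((P - 1 : ℤ) : ZMod N) := by
      rw [hP, hcast]; intro h
      apply zmod_nat_ne_zero (N := N) (n := 1) (by omega) (by omega)
      push_cast at h ⊢
      linear_combination h
    rw [Tgen_case3 d hN P Q hd1 hd2 hd3]
    have hrec := ih (by omega) (P - 1) Q (by push_cast [hP]; ring) hQ
    rw [hrec, show (P:ℤ) - 1 - ((n:ℕ):ℤ) = P - (((n+1:ℕ)):ℤ) by push_cast; ring]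

lemma phaseA (d : AffineGLData N L) [NeZero N] (hN3 : 3 ≤ N) (i : ZMod N) :
    ∀ n : ℕ, n ≤ N - 3 → ∀ P Q : ℤ, ((P : ZMod N) = i + 1) → ((Q : ZMod N) = i) →
      TaffComp d (((List.range n).map (fun k => i + (k : ZMod N) + 2)).reverse) (Fm d P Q)
        = Fm d P Q := by
  intro n
  induction n with
  | zero =>
    intro _ P Q hP hQ
    simp [TaffComp]
  | succ n ih =>
    intro hn P Q hP hQ
    have hN : ((N:ℕ):ℤ) ≠ 0 := by exact_mod_cast (NeZero.ne N)
    have hlist : ((List.range (n+1)).map (fun k => i + (k : ZMod N) + 2)).reverse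
        = (i + ((n:ℕ) : ZMod N) + 2) ::
            ((List.range n).map (fun k => i + (k : ZMod N) + 2)).reverse := by
      rw [List.range_succ]; simp
    rw [hlist]
    have hstep : TaffComp d ((i + ((n:ℕ) : ZMod N) + 2) ::
          ((List.range n).map (fun k => i + (k : ZMod N) + 2)).reverse) (Fm d P Q)
        = Taff d (i + ((n:ℕ) : ZMod N) + 2)
            (TaffComp d (((List.range n).map (fun k => i + (k : ZMod N) + 2)).reverse)
              (Fm d P Q)) := rfl
    rw [hstep, ih (by omega) P Q hP hQ]
    set a : ℤ := (((i + ((n:ℕ) : ZMod N) + 2).val : ℕ) : ℤ) with ha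
    have hkc : ((a : ℤ) : ZMod N) = i + ((n:ℕ) : ZMod N) + 2 := by
      rw [ha]; push_cast; rw [ZMod.natCast_zmod_val]
    rw [taff_eq d _ a hkc]
    apply Tgen_case1 d hN a P Q
    · rw [hP]; intro h
      apply zmod_nat_ne_zero (N := N) (n := n + 2) (by omega) (by omega)
      have h' : ((a : ℤ) : ZMod N) + 1 = i + 1 := by push_cast at h ⊢; linear_combination h
      rw [hkc] at h'
      push_cast at h' ⊢
      linear_combination h'
    · rw [hQ]; intro h
      apply zmod_nat_ne_zero (N := N) (n := n + 2) (by omega) (by omega)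
      rw [hkc] at h
      push_cast at h ⊢
      linear_combination -h
    · rw [hP, hkc]; intro h
      apply zmod_nat_ne_zero (N := N) (n := n + 1) (by omega) (by omega)
      push_cast at h ⊢
      linear_combination h
    · rw [hQ]; intro h
      apply zmod_nat_ne_zero (N := N) (n := n + 3) (by omega) (by omega)
      have h' : (i : ZMod N) = ((a : ℤ) : ZMod N) + 1 := by push_cast at h ⊢; linear_combination h
      rw [hkc] at h'
      push_cast at h' ⊢
      linear_combination -h'

lemma tword (d : AffineGLData N L) [NeZero N] (hN3 : 3 ≤ N) (i : ZMod N) (P Q : ℤ)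
    (hP : ((P:ℤ) : ZMod N) = i + 1) (hQ : ((Q:ℤ) : ZMod N) = i) :
    TaffComp d (tWord N i) (Fm d P Q) = (-1 : ℂ) • Fm d (P - (N:ℤ)) Q := by
  have hNz : ((N:ℕ):ℤ) ≠ 0 := by exact_mod_cast (NeZero.ne N)
  have h1 : ((1:ℕ) : ZMod N) ≠ 0 := zmod_nat_ne_zero (by omega) (by omega)
  have h2 : ((2:ℕ) : ZMod N) ≠ 0 := zmod_nat_ne_zero (by omega) (by omega)
  unfold tWord
  rw [TaffComp_append, TaffComp_append]
  rw [phaseA d hN3 i (N-3) le_rfl P Q hP hQ]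
  have hmid : TaffComp d [i-1, i, i-1] (Fm d P Q)
      = Taff d (i-1) (Taff d i (Taff d (i-1) (Fm d P Q))) := rfl
  rw [hmid]
  -- step 1 : vertex i-1 moves the second index down
  have hQ1 : ((Q - 1 : ℤ) : ZMod N) = i - 1 := by push_cast [hQ]; ring
  have d1 : ((Q:ℤ) : ZMod N) ≠ ((P:ℤ) : ZMod N) := by
    rw [hP, hQ]; intro h; apply h1; push_cast at h ⊢; linear_combination -h
  have d2 : ((Q - 1 : ℤ) : ZMod N) ≠ ((P:ℤ) : ZMod N) := by
    rw [hP, hQ1]; intro h; apply h2; push_cast at h ⊢; linear_combination -h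
  have d3 : ((Q:ℤ) : ZMod N) ≠ ((Q - 1 : ℤ) : ZMod N) := by
    rw [hQ, hQ1]; intro h; apply h1; push_cast at h ⊢; linear_combination h
  have s1 : Taff d (i-1) (Fm d P Q) = Fm d P (Q-1) := by
    rw [taff_eq d (i-1) (Q-1) hQ1, show (Q:ℤ) - 1 + 1 = Q by ring,
      Tgen_case5 d hNz P Q d1 d2 d3]
  rw [s1]
  -- step 2 : vertex i moves the first index down
  have hP1 : ((P - 1 : ℤ) : ZMod N) = i := by push_cast [hP]; ring
  have d5 : ((Q - 1 : ℤ) : ZMod N) ≠ ((P - 1 : ℤ) : ZMod N) := by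
    rw [hQ1, hP1]; intro h; apply h1; push_cast at h ⊢; linear_combination -h
  have d6 : ((P : ℤ) : ZMod N) ≠ ((P - 1 : ℤ) : ZMod N) := by
    rw [hP, hP1]; intro h; apply h1; push_cast at h ⊢; linear_combination h
  have s2 : Taff d i (Fm d P (Q-1)) = Fm d (P-1) (Q-1) := by
    rw [taff_eq d i (P-1) hP1, show (P:ℤ) - 1 + 1 = P by ring,
      Tgen_case3 d hNz P (Q-1) d2 d5 d6]
  rw [s2]
  -- step 3 : vertex i-1 again, sl2 reflection
  obtain ⟨w, hw⟩ : ∃ w, P = Q + 1 + (N:ℤ)*w := by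
    obtain ⟨w, hw⟩ := (ZMod.intCast_zmod_eq_zero_iff_dvd (P - (Q+1)) N).mp
      (by push_cast [hP, hQ]; ring)
    exact ⟨w, by linarith⟩
  have dne : ((Q - 1 : ℤ) : ZMod N) ≠ ((Q - 1 + 1 : ℤ) : ZMod N) := by
    intro h; apply h1; push_cast at h ⊢; linear_combination -h
  have harg : Fm d ((Q-1) + (N:ℤ)*w) ((Q-1) + 1) = Fm d (P - 2) Q := by
    rw [show (Q:ℤ)-1 + (N:ℤ)*w = P - 2 by rw [hw]; ring, show (Q:ℤ)-1+1 = Q by ring]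
  have s3 : Taff d (i-1) (Fm d (P-1) (Q-1)) = (-1:ℂ) • Fm d (P - 2) Q := by
    rw [taff_eq d (i-1) (Q-1) hQ1,
      show (P:ℤ) - 1 = (Q-1) + 1 + (N:ℤ)*w by rw [hw]; ring,
      Tgen_case7 d hNz (Q-1) w dne, harg, ← neg_one_smul ℂ (Fm d (P - 2) Q)]
  rw [s3, TaffComp_smul]
  -- phase C : the final sweep
  have hc2 : (((N-2 : ℕ)) : ZMod N) = -2 := by
    rw [Nat.cast_sub (by omega)]
    simp [ZMod.natCast_self]
  have hP2 : ((P - 2 : ℤ) : ZMod N) = i + 1 + (((N-2:ℕ)) : ZMod N) := by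
    rw [hc2]; push_cast [hP]; ring
  rw [sweep d hN3 i (N-2) le_rfl (P-2) Q hP2 hQ]
  rw [show (P:ℤ) - 2 - (((N-2:ℕ)):ℤ) = P - (N:ℤ) by
    push_cast [Nat.cast_sub (show 2 ≤ N by omega)]; ring]

lemma reps (d : AffineGLData N L) [NeZero N] (hN3 : 3 ≤ N) (i : ZMod N) :
    ∀ n : ℕ, ∀ P Q : ℤ, ((P:ℤ) : ZMod N) = i + 1 → ((Q:ℤ) : ZMod N) = i →
      TaffComp d (List.flatten (List.replicate n (tWord N i))) (Fm d P Q)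
        = ((-1:ℂ)^n) • Fm d (P - (n:ℤ)*(N:ℤ)) Q := by
  intro n
  induction n with
  | zero =>
    intro P Q hP hQ
    simp [TaffComp]
  | succ n ih =>
    intro P Q hP hQ
    rw [List.replicate_succ, List.flatten_cons, TaffComp_append, ih P Q hP hQ, TaffComp_smul]
    have hP' : ((P - (n:ℤ)*(N:ℤ) : ℤ) : ZMod N) = i + 1 := by
      push_cast [ZMod.natCast_self, hP]; ring
    rw [tword d hN3 i (P - (n:ℤ)*(N:ℤ)) Q hP' hQ, smul_smul,
      show ((-1:ℂ)^n * (-1)) = (-1:ℂ)^(n+1) from (pow_succ _ _).symm,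
      show (P:ℤ) - (n:ℤ)*(N:ℤ) - (N:ℤ) = P - (((n+1:ℕ)):ℤ)*(N:ℤ) by push_cast; ring]

theorem stmt15 (N : ℕ) [NeZero N] (hN : 3 ≤ N) (L : Type) [LieRing L] [LieAlgebra ℂ L]
    (d : AffineGLData N L) (i : ZMod N) (m : ℕ) (hm : 1 ≤ m) :
    TaffComp d (wWord N i m) (xp d (i - 1)) =
      ((-1 : ℂ)) ^ (m - 1) •
        (if i = 0 then d.E 1 0 ((m : ℤ) - 1) else d.E (i + 1) i (m : ℤ)) := by
  have hNz : ((N:ℕ):ℤ) ≠ 0 := by exact_mod_cast (NeZero.ne N)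
  unfold wWord
  rw [TaffComp_append, xp_eq d (i-1)]
  set j : ℤ := ((((i-1).val : ℕ)) : ℤ) with hjdef
  have hjlt : (i-1).val < N := ZMod.val_lt _
  have hjc : ((j : ℤ) : ZMod N) = i - 1 := by
    rw [hjdef]; push_cast; rw [ZMod.natCast_zmod_val]
  have hc2 : (((N-2 : ℕ)) : ZMod N) = -2 := by
    rw [Nat.cast_sub (by omega)]
    simp [ZMod.natCast_self]
  have hPc : ((j : ℤ) : ZMod N) = i + 1 + (((N-2:ℕ)) : ZMod N) := by
    rw [hjc, hc2]; ring
  have hQc : ((j + 1 : ℤ) : ZMod N) = i := by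
    push_cast [hjc]; ring
  rw [show tailWord N i = (List.range (N-2)).map (fun k => i + (k : ZMod N) + 1) from rfl]
  rw [sweep d hN i (N-2) le_rfl j (j+1) hPc hQc]
  have hPc2 : ((j - ((N-2:ℕ):ℤ) : ℤ) : ZMod N) = i + 1 := by
    push_cast [Nat.cast_sub (show 2 ≤ N by omega), ZMod.natCast_self, hjc]; ring
  rw [reps d hN i (m-1) (j - ((N-2:ℕ):ℤ)) (j+1) hPc2 hQc]
  congr 1
  set A : ℤ := j - ((N-2:ℕ):ℤ) - ((m-1:ℕ):ℤ)*(N:ℤ) with hA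
  have hAc : ((A : ℤ) : ZMod N) = i + 1 := by
    rw [hA]
    push_cast [Nat.cast_sub (show 2 ≤ N by omega), Nat.cast_sub hm, ZMod.natCast_self, hjc]
    ring
  have hA1 : A - 1 = (j + 1) + (-(m:ℤ))*(N:ℤ) := by
    rw [hA]
    push_cast [Nat.cast_sub (show 2 ≤ N by omega), Nat.cast_sub hm]
    ring
  have hdivA : (A - 1)/(N:ℤ) = (j+1)/(N:ℤ) - (m:ℤ) := by
    rw [hA1, Int.add_mul_ediv_right _ _ hNz]; ring
  have hj0 : j/(N:ℤ) = 0 := ediv_small (by omega) (by omega)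
  unfold Fm degF
  by_cases hi : i = 0
  · rw [if_pos hi]
    have hv : (i-1).val = N - 1 := by
      have h3 : ((N-1:ℕ) : ZMod N) = -1 := by
        push_cast [Nat.cast_sub (show 1 ≤ N by omega), ZMod.natCast_self]
        ring
      have h2 : i - 1 = ((N-1 : ℕ) : ZMod N) := by
        rw [h3, hi]; ring
      rw [h2, ZMod.val_cast_of_lt (by omega)]
    have hjN : j + 1 = (N:ℤ) := by rw [hjdef, hv]; omega
    have hd1 : (j+1)/(N:ℤ) = 1 := by rw [hjN]; exact Int.ediv_self hNz
    have hAc' : ((A : ℤ) : ZMod N) = 1 := by rw [hAc, hi]; ring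
    have hQc' : ((j + 1 : ℤ) : ZMod N) = 0 := by rw [hQc, hi]
    rw [hAc', hQc']
    congr 1
    rw [show j + 1 - 1 = j by ring, hj0, hdivA, hd1]
    omega
  · rw [if_neg hi]
    have hv' : (i-1).val ≠ N - 1 := by
      intro h
      apply hi
      have h3 : ((N-1:ℕ) : ZMod N) = -1 := by
        push_cast [Nat.cast_sub (show 1 ≤ N by omega), ZMod.natCast_self]
        ring
      have h2 : i - 1 = ((N-1 : ℕ) : ZMod N) := by
        rw [← ZMod.natCast_zmod_val (i-1), h]
      have h4 := h2.trans h3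
      linear_combination h4
    have hd1 : (j+1)/(N:ℤ) = 0 := by
      refine ediv_small (by omega) ?_
      rw [hjdef]
      have : (i-1).val ≤ N - 2 := by omega
      omega
    rw [hAc, hQc]
    congr 1
    rw [show j + 1 - 1 = j by ring, hj0, hdivA, hd1]
    omega
end
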